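/- Let v_1, ..., v_T ≥ 0 and define h({v_1,...,v_T}) as the minimum of Σ_{j=1}^M a_j over all M ∈ ℕ⁺, weights a_j > 0, and intervals U_j = [s_j, t_j] ⊆ [1,T] (with integer endpoints) such that v_t = Σ_j a_j·1{t ∈ U_j} for all t. Then h({v_1,...,v_T}) = Σ_{t=1}^T max(v_t − v_{t-1}, 0), where v_0 = 0. -/

import Mathlib

namespace IntervalDecomp

abbrev Item := ℝ × ℕ × ℕ

def wsum (l : List Item) : ℝ := (l.map Prod.fst).sum

def val (l : List Item) (x : ℕ) : ℝ :=
  (l.map (fun p => p.1 * (if p.2.1 ≤ x ∧ x ≤ p.2.2 then (1:ℝ) else 0))).sum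

def endSum (l : List Item) (T : ℕ) : ℝ :=
  (l.map (fun p => if p.2.2 = T then p.1 else 0)).sum

open scoped Classical in
noncomputable def ext (T : ℕ) : List Item → ℝ → List Item
  | [], _ => []
  | p :: l, r =>
    if p.2.2 = T then
      if p.1 ≤ r then (p.1, p.2.1, T+1) :: ext T l (r - p.1)
      else if 0 < r then (r, p.2.1, T+1) :: (p.1 - r, p.2.1, p.2.2) :: ext T l 0
      else p :: ext T l 0
    else p :: ext T l r

lemma ext_nil (T : ℕ) (r : ℝ) : ext T [] r = [] := rfl
open scoped Classical in
lemma ext_cons (T : ℕ) (p : Item) (l : List Item) (r : ℝ) :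
    ext T (p :: l) r =
    if p.2.2 = T then
      if p.1 ≤ r then (p.1, p.2.1, T+1) :: ext T l (r - p.1)
      else if 0 < r then (r, p.2.1, T+1) :: (p.1 - r, p.2.1, p.2.2) :: ext T l 0
      else p :: ext T l 0
    else p :: ext T l r := by
  rw [ext]

lemma wsum_nil : wsum [] = 0 := rfl
lemma wsum_cons (p : Item) (l : List Item) : wsum (p :: l) = p.1 + wsum l := rfl
lemma val_nil (x : ℕ) : val [] x = 0 := rfl
lemma val_cons (p : Item) (l : List Item) (x : ℕ) :
    val (p :: l) x = p.1 * (if p.2.1 ≤ x ∧ x ≤ p.2.2 then (1:ℝ) else 0) + val l x := rfl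
lemma endSum_cons (p : Item) (l : List Item) (T : ℕ) :
    endSum (p :: l) T = (if p.2.2 = T then p.1 else 0) + endSum l T := rfl

lemma val_append (l₁ l₂ : List Item) (x : ℕ) : val (l₁ ++ l₂) x = val l₁ x + val l₂ x := by
  simp [val]
lemma wsum_append (l₁ l₂ : List Item) : wsum (l₁ ++ l₂) = wsum l₁ + wsum l₂ := by
  simp [wsum]

lemma endSum_nonneg (l : List Item) (T : ℕ) (h : ∀ p ∈ l, 0 < p.1) : 0 ≤ endSum l T := by
  induction l with
  | nil => simp [endSum]
  | cons p l ih =>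
      rw [endSum_cons]
      have hp := h p (by simp)
      have := ih (fun q hq => h q (by simp [hq]))
      split <;> nlinarith

lemma ext_wsum (T : ℕ) (r : ℝ) (l : List Item) : wsum (ext T l r) = wsum l := by
  induction l generalizing r with
  | nil => simp [ext_nil]
  | cons p l ih =>
      obtain ⟨a, s, t⟩ := p
      rw [ext_cons]
      dsimp only
      split
      · split
        · rw [wsum_cons, ih, wsum_cons]
        · split
          · rw [wsum_cons, wsum_cons, ih, wsum_cons]; dsimp only; ring
          · rw [wsum_cons, ih, wsum_cons]
      · rw [wsum_cons, ih, wsum_cons]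

lemma ext_valid (T : ℕ) (r : ℝ) (l : List Item)
    (h : ∀ p ∈ l, 0 < p.1 ∧ 1 ≤ p.2.1 ∧ p.2.1 ≤ p.2.2 ∧ p.2.2 ≤ T) (hr : 0 ≤ r) :
    ∀ q ∈ ext T l r, 0 < q.1 ∧ 1 ≤ q.2.1 ∧ q.2.1 ≤ q.2.2 ∧ q.2.2 ≤ T+1 := by
  induction l generalizing r with
  | nil => intro q hq; simp [ext_nil] at hq
  | cons p l ih =>
      obtain ⟨a, s, t⟩ := p
      obtain ⟨ha, hs1, hst, htT⟩ := h (a, s, t) (by simp)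
      dsimp only at ha hs1 hst htT
      have htail : ∀ p ∈ l, 0 < p.1 ∧ 1 ≤ p.2.1 ∧ p.2.1 ≤ p.2.2 ∧ p.2.2 ≤ T :=
        fun q hq => h q (by simp [hq])
      intro q hq
      rw [ext_cons] at hq
      dsimp only at hq
      split at hq
      · split at hq
        · rename_i har
          rcases List.mem_cons.1 hq with rfl | hq
          · exact ⟨ha, hs1, by dsimp only; omega, by dsimp only; omega⟩
          · exact ih (r - a) htail (by linarith) q hq
        · rename_i har
          split at hq
          · rename_i hr0
            rcases List.mem_cons.1 hq with rfl | hq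
            · exact ⟨hr0, hs1, by dsimp only; omega, by dsimp only; omega⟩
            rcases List.mem_cons.1 hq with rfl | hq
            · exact ⟨by dsimp only; linarith, hs1, hst, by dsimp only; omega⟩
            · exact ih 0 htail le_rfl q hq
          · rcases List.mem_cons.1 hq with rfl | hq
            · exact ⟨ha, hs1, hst, by dsimp only; omega⟩
            · exact ih 0 htail le_rfl q hq
      · rcases List.mem_cons.1 hq with rfl | hq
        · exact ⟨ha, hs1, hst, by dsimp only; omega⟩
        · exact ih r htail hr q hq

lemma ext_val_le (T : ℕ) (r : ℝ) (l : List Item) (x : ℕ) (hx : x ≤ T) :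
    val (ext T l r) x = val l x := by
  induction l generalizing r with
  | nil => simp [ext_nil]
  | cons p l ih =>
      obtain ⟨a, s, t⟩ := p
      rw [ext_cons]
      dsimp only
      split
      · rename_i ht
        have hind : (if s ≤ x ∧ x ≤ T + 1 then (1:ℝ) else 0) = (if s ≤ x ∧ x ≤ t then (1:ℝ) else 0) :=
          if_congr (by omega) rfl rfl
        split
        · rw [val_cons, ih, val_cons]; dsimp only; rw [hind]
        · split
          · rw [val_cons, val_cons, ih, val_cons]; dsimp only; rw [hind]; ring
          · rw [val_cons, ih, val_cons]
      · rw [val_cons, ih, val_cons]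

lemma ext_val_top (T : ℕ) (r : ℝ) (l : List Item)
    (h : ∀ p ∈ l, 0 < p.1 ∧ 1 ≤ p.2.1 ∧ p.2.1 ≤ p.2.2 ∧ p.2.2 ≤ T)
    (hr0 : 0 ≤ r) (hrs : r ≤ endSum l T) :
    val (ext T l r) (T+1) = r := by
  induction l generalizing r with
  | nil =>
      simp [endSum] at hrs; simp [ext_nil, val]; linarith
  | cons p l ih =>
      obtain ⟨a, s, t⟩ := p
      obtain ⟨ha, hs1, hst, htT⟩ := h (a, s, t) (by simp)
      dsimp only at ha hs1 hst htT
      have htail : ∀ p ∈ l, 0 < p.1 ∧ 1 ≤ p.2.1 ∧ p.2.1 ≤ p.2.2 ∧ p.2.2 ≤ T :=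
        fun q hq => h q (by simp [hq])
      have hens : 0 ≤ endSum l T := endSum_nonneg l T (fun q hq => (htail q hq).1)
      rw [endSum_cons] at hrs
      dsimp only at hrs
      rw [ext_cons]
      dsimp only
      split
      · rename_i ht
        rw [if_pos ht] at hrs
        split
        · rename_i har
          rw [val_cons, ih (r - a) htail (by linarith) (by linarith)]
          dsimp only
          rw [if_pos ⟨by omega, le_rfl⟩]
          ring
        · rename_i har
          split
          · rw [val_cons, val_cons, ih 0 htail le_rfl hens]
            dsimp only
            rw [if_pos ⟨by omega, le_rfl⟩, if_neg (by omega)]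
            ring
          · rename_i hr0'
            have : r = 0 := le_antisymm (not_lt.1 hr0') hr0
            subst this
            rw [val_cons, ih 0 htail le_rfl hens]
            dsimp only
            rw [if_neg (by omega)]
            ring
      · rename_i ht
        rw [if_neg ht] at hrs
        rw [val_cons, ih r htail hr0 (by linarith)]
        dsimp only
        rw [if_neg (by omega)]
        ring


lemma endSum_eq_val (l : List Item) (T : ℕ) (hT : 1 ≤ T)
    (h : ∀ p ∈ l, 0 < p.1 ∧ 1 ≤ p.2.1 ∧ p.2.1 ≤ p.2.2 ∧ p.2.2 ≤ T) :
    endSum l T = val l T := by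
  induction l with
  | nil => simp [endSum, val]
  | cons p l ih =>
      obtain ⟨a, s, t⟩ := p
      obtain ⟨ha, hs1, hst, htT⟩ := h (a, s, t) (by simp)
      dsimp only at ha hs1 hst htT
      rw [endSum_cons, val_cons, ih (fun q hq => h q (by simp [hq]))]
      dsimp only
      by_cases ht : t = T
      · rw [if_pos ht, if_pos ⟨by omega, by omega⟩]; ring
      · rw [if_neg ht, if_neg (by omega)]; ring

lemma exists_list (T : ℕ) (v : ℕ → ℝ) (hv0 : v 0 = 0)
    (hv : ∀ t ∈ Finset.Icc 1 T, 0 ≤ v t) :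
    ∃ l : List Item, (∀ p ∈ l, 0 < p.1 ∧ 1 ≤ p.2.1 ∧ p.2.1 ≤ p.2.2 ∧ p.2.2 ≤ T) ∧
      (∀ x ∈ Finset.Icc 1 T, v x = val l x) ∧
      wsum l = ∑ t ∈ Finset.Icc 1 T, max (v t - v (t-1)) 0 := by
  induction T with
  | zero => exact ⟨[], by simp, by simp, by simp [wsum]⟩
  | succ T ih =>
      obtain ⟨l, hvalid, hval, hws⟩ := ih (fun t ht => hv t (by
        simp only [Finset.mem_Icc] at ht ⊢; omega))
      have hvT1 : 0 ≤ v (T+1) := hv (T+1) (by simp)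
      have hvT : 0 ≤ v T := by
        rcases Nat.eq_zero_or_pos T with rfl | hT
        · rw [hv0]
        · exact hv T (by simp [Finset.mem_Icc]; omega)
      set r : ℝ := min (v (T+1)) (v T) with hr
      have hr0 : 0 ≤ r := le_min hvT1 hvT
      have hrend : r ≤ endSum l T := by
        rcases Nat.eq_zero_or_pos T with rfl | hT
        · have : endSum l 0 = 0 := by
            have hl : l = [] := by
              cases l with
              | nil => rfl
              | cons p l =>
                  exfalso
                  obtain ⟨_, h1, h2, h3⟩ := hvalid p (by simp)
                  omega
            rw [hl]; rfl
          rw [this, hr, hv0]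
          simp [hvT1]
        · rw [endSum_eq_val l T hT hvalid, ← hval T (by simp [Finset.mem_Icc]; omega)]
          exact min_le_right _ _
      set tail : List Item := if v T < v (T+1) then [(v (T+1) - v T, T+1, T+1)] else []
        with htail
      refine ⟨ext T l r ++ tail, ?_, ?_, ?_⟩
      · intro q hq
        rcases List.mem_append.1 hq with hq | hq
        · exact ext_valid T r l hvalid hr0 q hq
        · rw [htail] at hq
          split at hq
          · rename_i hlt
            simp only [List.mem_singleton] at hq
            subst hq
            exact ⟨by dsimp only; linarith, by dsimp only; omega, le_rfl, le_rfl⟩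
          · simp at hq
      · intro x hx
        simp only [Finset.mem_Icc] at hx
        rw [val_append]
        rcases Nat.lt_or_ge x (T+1) with hle | hge
        · have hle : x ≤ T := by omega
          have htail0 : val tail x = 0 := by
            rw [htail]
            split
            · rw [val_cons, val_nil]
              dsimp only
              rw [if_neg (by omega)]
              ring
            · rw [val_nil]
          rw [ext_val_le T r l x hle, htail0, ← hval x (by simp [Finset.mem_Icc]; omega)]
          ring
        · have hx1 : x = T + 1 := by omega
          subst hx1
          rw [ext_val_top T r l hvalid hr0 hrend]
          have htv : val tail (T+1) = if v T < v (T+1) then v (T+1) - v T else 0 := by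
            rw [htail]
            split
            · rw [val_cons, val_nil]
              dsimp only
              rw [if_pos ⟨le_rfl, le_rfl⟩]
              ring
            · rw [val_nil]
          rw [htv, hr]
          rcases lt_or_ge (v T) (v (T+1)) with h | h
          · rw [if_pos h, min_eq_right (le_of_lt h)]; ring
          · rw [if_neg (not_lt.2 h), min_eq_left h]; ring
      · rw [wsum_append, ext_wsum, hws,
          Finset.sum_Icc_succ_top (by omega : 1 ≤ T + 1)]
        have : wsum tail = max (v (T+1) - v (T+1-1)) 0 := by
          rw [htail]
          have hTT : T + 1 - 1 = T := by omega
          rw [hTT]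
          rcases lt_or_ge (v T) (v (T+1)) with h | h
          · rw [if_pos h, wsum_cons, wsum_nil, max_eq_left (by linarith)]
            ring
          · rw [if_neg (not_lt.2 h), wsum_nil, max_eq_right (by linarith)]
        rw [this]

lemma sum_fin_map (l : List Item) (f : Item → ℝ) :
    ∑ j : Fin l.length, f (l.get j) = (l.map f).sum := by
  induction l with
  | nil => simp
  | cons p l ih =>
      have h : ∑ j : Fin (l.length + 1), f ((p :: l).get j) = (List.map f (p :: l)).sum := by
        rw [Fin.sum_univ_succ]
        simp [ih]
      exact h

end IntervalDecomp

theorem interval_decomposition (T : ℕ) (v : ℕ → ℝ)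
    (hv0 : v 0 = 0) (hv : ∀ t ∈ Finset.Icc 1 T, 0 ≤ v t) :
    IsLeast
      {S : ℝ | ∃ (M : ℕ) (a : Fin M → ℝ) (s t : Fin M → ℕ),
        (∀ j, 0 < a j) ∧
        (∀ j, 1 ≤ s j ∧ s j ≤ t j ∧ t j ≤ T) ∧
        (∀ x ∈ Finset.Icc 1 T,
          v x = ∑ j, a j * (if x ∈ Finset.Icc (s j) (t j) then (1 : ℝ) else 0)) ∧
        S = ∑ j, a j}
      (∑ t ∈ Finset.Icc 1 T, max (v t - v (t - 1)) 0) := by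
  constructor
  · -- membership
    obtain ⟨l, hvalid, hval, hws⟩ := IntervalDecomp.exists_list T v hv0 hv
    refine ⟨l.length, fun j => (l.get j).1, fun j => (l.get j).2.1, fun j => (l.get j).2.2,
      fun j => (hvalid _ (List.get_mem l j)).1,
      fun j => ⟨(hvalid _ (List.get_mem l j)).2.1, (hvalid _ (List.get_mem l j)).2.2.1,
        (hvalid _ (List.get_mem l j)).2.2.2⟩, ?_, ?_⟩
    · intro x hx
      rw [hval x hx, IntervalDecomp.val]
      rw [← IntervalDecomp.sum_fin_map l (fun p => p.1 * (if p.2.1 ≤ x ∧ x ≤ p.2.2 then (1:ℝ) else 0))]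
      simp [Finset.mem_Icc]
    · rw [← hws, IntervalDecomp.wsum, ← IntervalDecomp.sum_fin_map l Prod.fst]
  · -- lower bound
    rintro S ⟨M, a, s, t, hpos, hbounds, hrepr, rfl⟩
    have key : ∀ x ∈ Finset.Icc 1 T,
        max (v x - v (x-1)) 0 ≤ ∑ j, a j * (if s j = x then (1:ℝ) else 0) := by
      intro x hx
      simp only [Finset.mem_Icc] at hx
      have hrhs0 : (0:ℝ) ≤ ∑ j, a j * (if s j = x then (1:ℝ) else 0) :=
        Finset.sum_nonneg fun j _ => mul_nonneg (hpos j).le (by split <;> norm_num)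
      have hprev : v (x-1) = ∑ j, a j * (if x-1 ∈ Finset.Icc (s j) (t j) then (1:ℝ) else 0) := by
        rcases Nat.eq_zero_or_pos (x-1) with h0 | hpos1
        · rw [h0, hv0]
          symm
          apply Finset.sum_eq_zero
          intro j _
          have hb1 := (hbounds j).1
          rw [if_neg (by simp [Finset.mem_Icc]; omega), mul_zero]
        · exact hrepr (x-1) (by simp [Finset.mem_Icc]; omega)
      have hdiff : v x - v (x-1) ≤ ∑ j, a j * (if s j = x then (1:ℝ) else 0) := by
        rw [hrepr x (by simp [Finset.mem_Icc]; omega), hprev, ← Finset.sum_sub_distrib]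
        apply Finset.sum_le_sum
        intro j _
        have haj := (hpos j).le
        obtain ⟨hs1, hst, htT⟩ := hbounds j
        by_cases hsx : s j = x
        · rw [if_pos hsx]
          have h1 : (if x ∈ Finset.Icc (s j) (t j) then (1:ℝ) else 0) ≤ 1 := by
            split <;> norm_num
          have h2 : (0:ℝ) ≤ (if x-1 ∈ Finset.Icc (s j) (t j) then (1:ℝ) else 0) := by
            split <;> norm_num
          nlinarith
        · rw [if_neg hsx, mul_zero]
          have : (if x ∈ Finset.Icc (s j) (t j) then (1:ℝ) else 0) ≤
              (if x-1 ∈ Finset.Icc (s j) (t j) then (1:ℝ) else 0) := by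
            by_cases hmem : x ∈ Finset.Icc (s j) (t j)
            · rw [if_pos hmem]
              simp only [Finset.mem_Icc] at hmem
              rw [if_pos (by simp [Finset.mem_Icc]; omega)]
            · rw [if_neg hmem]
              split <;> norm_num
          nlinarith
      exact max_le hdiff hrhs0
    calc ∑ x ∈ Finset.Icc 1 T, max (v x - v (x-1)) 0
        ≤ ∑ x ∈ Finset.Icc 1 T, ∑ j, a j * (if s j = x then (1:ℝ) else 0) :=
          Finset.sum_le_sum key
      _ = ∑ j, ∑ x ∈ Finset.Icc 1 T, a j * (if s j = x then (1:ℝ) else 0) :=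
          Finset.sum_comm
      _ = ∑ j, a j := by
          apply Finset.sum_congr rfl
          intro j _
          obtain ⟨hs1, hst, htT⟩ := hbounds j
          rw [← Finset.mul_sum]
          rw [Finset.sum_ite_eq (Finset.Icc 1 T) (s j) (fun _ => (1:ℝ))]
          rw [if_pos (by simp [Finset.mem_Icc]; omega)]
          ring
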